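/- For nonnegative integers k, l and x, y, z with x + y + z = 1, (-1)^k * sum_{j=0}^{k} binomial(k,j) * x^{k-j} * B_{l+j+1}(y)/(l+j+1) + (-1)^l * sum_{j=0}^{l} binomial(l,j) * x^{l-j} * B_{k+j+1}(z)/(k+j+1) = (-x)^{k+l+1} / ((k+l+1) * binomial(k+l, k)). -/

import Mathlib

open Finset

namespace SunAux
open Polynomial PowerSeries

noncomputable def B (t : ℚ) : PowerSeries ℚ :=
  PowerSeries.mk fun n => (Polynomial.bernoulli n).eval t / n.factorial

lemma B_mul (t : ℚ) :
    B t * (PowerSeries.exp ℚ - 1) = PowerSeries.X * PowerSeries.rescale t (PowerSeries.exp ℚ) := by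
  have h := Polynomial.bernoulli_generating_function (A := ℚ) t
  convert h using 2
  ext n
  have : (Polynomial.aeval t : ℚ[X] → ℚ) = Polynomial.eval t := Polynomial.coe_aeval_eq_eval t
  simp only [B, PowerSeries.coeff_mk, map_smul, this, smul_eq_mul, div_eq_mul_inv, one_div,
    one_mul, mul_one, mul_comm]

lemma exp_sub_one_ne : (PowerSeries.exp ℚ - 1) ≠ 0 := by
  intro h
  have := congrArg (PowerSeries.coeff (R := ℚ) 1) h
  simp [PowerSeries.coeff_exp] at this

end SunAux

namespace SunAux
open Polynomial PowerSeries

lemma B_add (a b : ℚ) : B (a + b) = B a * PowerSeries.rescale b (PowerSeries.exp ℚ) := by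
  apply mul_right_cancel₀ exp_sub_one_ne
  rw [B_mul, mul_right_comm, B_mul, mul_assoc, PowerSeries.exp_mul_exp_eq_exp_add]

lemma bernoulli_eval_add (n : ℕ) (a b : ℚ) :
    (Polynomial.bernoulli n).eval (a + b)
      = ∑ i ∈ range (n + 1),
          (n.choose i : ℚ) * (Polynomial.bernoulli i).eval a * b ^ (n - i) := by
  have h := congrArg (PowerSeries.coeff (R := ℚ) n) (B_add a b)
  rw [PowerSeries.coeff_mul, Nat.sum_antidiagonal_eq_sum_range_succ_mk] at h
  simp only [B, PowerSeries.coeff_mk, PowerSeries.coeff_rescale, PowerSeries.coeff_exp,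
    Algebra.algebraMap_self, RingHom.id_apply] at h
  have hn : ((n.factorial : ℚ)) ≠ 0 := by exact_mod_cast n.factorial_ne_zero
  rw [div_eq_iff hn] at h
  rw [h, Finset.sum_mul]
  refine Finset.sum_congr rfl fun i hi => ?_
  have hi' : i ≤ n := Nat.lt_succ_iff.mp (Finset.mem_range.mp hi)
  have hif : ((i.factorial : ℚ)) ≠ 0 := by exact_mod_cast i.factorial_ne_zero
  have hnif : (((n - i).factorial : ℚ)) ≠ 0 := by exact_mod_cast (n - i).factorial_ne_zero
  rw [Nat.cast_choose ℚ hi']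
  field_simp

end SunAux

namespace SunAux
open Polynomial PowerSeries

lemma exp_neg_mul_exp : PowerSeries.rescale (-1 : ℚ) (PowerSeries.exp ℚ) * PowerSeries.exp ℚ = 1 := by
  have h := PowerSeries.exp_mul_exp_eq_exp_add (-1 : ℚ) 1
  rw [PowerSeries.rescale_one] at h
  simp only [neg_add_cancel, RingHom.id_apply] at h
  rw [h, PowerSeries.rescale_zero]
  simp [PowerSeries.constantCoeff_exp]

lemma B_reflect (t : ℚ) : B (1 - t) = PowerSeries.rescale (-1 : ℚ) (B t) := by
  apply mul_right_cancel₀ exp_sub_one_ne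
  rw [B_mul]
  have h := congrArg (PowerSeries.rescale (-1 : ℚ)) (B_mul t)
  rw [map_mul, map_mul, map_sub, map_one, PowerSeries.rescale_neg_one_X,
    PowerSeries.rescale_rescale] at h
  have key : (PowerSeries.exp ℚ - 1)
      = -((PowerSeries.rescale (-1 : ℚ) (PowerSeries.exp ℚ) - 1) * PowerSeries.exp ℚ) := by
    rw [sub_mul, one_mul, exp_neg_mul_exp]; ring
  calc PowerSeries.X * PowerSeries.rescale (1 - t) (PowerSeries.exp ℚ)
      = PowerSeries.X * (PowerSeries.rescale (t * -1) (PowerSeries.exp ℚ) * PowerSeries.exp ℚ) := by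
        have h2 := PowerSeries.exp_mul_exp_eq_exp_add (-t : ℚ) 1
        rw [PowerSeries.rescale_one, RingHom.id_apply] at h2
        rw [show (1 - t : ℚ) = -t + 1 by ring, ← h2, show (t * -1 : ℚ) = -t by ring]
    _ = -((-PowerSeries.X * PowerSeries.rescale (t * -1) (PowerSeries.exp ℚ)) * PowerSeries.exp ℚ) := by ring
    _ = -((PowerSeries.rescale (-1 : ℚ) (B t) * (PowerSeries.rescale (-1 : ℚ) (PowerSeries.exp ℚ) - 1)) * PowerSeries.exp ℚ) := by rw [h]
    _ = PowerSeries.rescale (-1 : ℚ) (B t) * (PowerSeries.exp ℚ - 1) := by rw [key]; ring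

lemma bernoulli_eval_one_sub (n : ℕ) (t : ℚ) :
    (Polynomial.bernoulli n).eval (1 - t) = (-1 : ℚ) ^ n * (Polynomial.bernoulli n).eval t := by
  have h := congrArg (PowerSeries.coeff (R := ℚ) n) (B_reflect t)
  simp only [B, PowerSeries.coeff_mk, PowerSeries.coeff_rescale] at h
  have hn : ((n.factorial : ℚ)) ≠ 0 := by exact_mod_cast n.factorial_ne_zero
  field_simp at h
  linarith [h]

end SunAux

namespace SunAux
open Polynomial

noncomputable def S (k l : ℕ) (x y : ℚ) : ℚ :=
  ∑ j ∈ range (k + 1),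
    (k.choose j : ℚ) * x ^ (k - j) * (Polynomial.bernoulli (l + j + 1)).eval y / (l + j + 1)

noncomputable def R (k l : ℕ) (x : ℚ) : ℚ :=
  (-x) ^ (k + l + 1) / ((k + l + 1) * ((k + l).choose k : ℚ))

lemma Srec (k l : ℕ) (x y : ℚ) :
    S (k + 1) l x y = x * S k l x y + S k (l + 1) x y := by
  unfold S
  have hx : x * ∑ j ∈ range (k + 1),
      (k.choose j : ℚ) * x ^ (k - j) * (Polynomial.bernoulli (l + j + 1)).eval y / (l + j + 1)
    = (∑ i ∈ range (k + 1), (k.choose (i + 1) : ℚ) * x ^ (k - i) *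
        (Polynomial.bernoulli (l + i + 2)).eval y / (l + i + 2))
      + x ^ (k + 1) * (Polynomial.bernoulli (l + 1)).eval y / (l + 1) := by
    rw [Finset.mul_sum, Finset.sum_range_succ' _ k, Finset.sum_range_succ _ k]
    have hz : (k.choose (k + 1) : ℚ) * x ^ (k - k) *
        (Polynomial.bernoulli (l + k + 2)).eval y / (↑l + ↑k + 2) = 0 := by
      simp [Nat.choose_succ_self]
    rw [hz]
    congr 1
    · rw [add_zero]
      apply Finset.sum_congr rfl
      intro i hi
      have hik : i < k := Finset.mem_range.mp hi
      have e1 : k - i = k - (i + 1) + 1 := by omega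
      have e2 : l + (i + 1) + 1 = l + i + 2 := by omega
      rw [e1, e2, pow_succ]
      push_cast
      ring
    · simp only [Nat.choose_zero_right, Nat.cast_one, Nat.cast_zero, add_zero, one_mul,
        Nat.sub_zero]
      rw [pow_succ]
      ring
  have pascal : ∀ i ∈ range (k + 1),
      ((k + 1).choose (i + 1) : ℚ) * x ^ (k + 1 - (i + 1)) *
          (Polynomial.bernoulli (l + (i + 1) + 1)).eval y / (↑l + ↑(i + 1) + 1)
        = (k.choose i : ℚ) * x ^ (k - i) *
            (Polynomial.bernoulli (l + 1 + i + 1)).eval y / (↑(l + 1) + ↑i + 1)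
          + (k.choose (i + 1) : ℚ) * x ^ (k - i) *
            (Polynomial.bernoulli (l + i + 2)).eval y / (↑l + ↑i + 2) := by
    intro i hi
    have e2 : l + (i + 1) + 1 = l + 1 + i + 1 := by omega
    have e3 : l + 1 + i + 1 = l + i + 2 := by omega
    have e4 : k + 1 - (i + 1) = k - i := by omega
    rw [e2, e4, Nat.choose_succ_succ, e3]
    push_cast
    ring
  rw [Finset.sum_range_succ' _ (k + 1), Finset.sum_congr rfl pascal,
    Finset.sum_add_distrib, hx]
  simp only [Nat.choose_zero_right, Nat.cast_one, Nat.cast_zero, add_zero, one_mul]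
  push_cast
  ring

end SunAux

namespace SunAux
open Polynomial

lemma S_base (l : ℕ) (x z : ℚ) :
    ((l : ℚ) + 1) * S l 0 x z
      = (Polynomial.bernoulli (l + 1)).eval (z + x) - x ^ (l + 1) := by
  have hadd := bernoulli_eval_add (l + 1) z x
  rw [Finset.sum_range_succ' _ (l + 1)] at hadd
  simp only [Nat.choose_zero_right, Nat.cast_one, one_mul, Nat.sub_zero,
    Polynomial.bernoulli_zero, Polynomial.eval_one, mul_one, Nat.succ_sub_succ] at hadd
  unfold S
  rw [Finset.mul_sum]
  have : ∀ j ∈ range (l + 1),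
      ((l : ℚ) + 1) * ((l.choose j : ℚ) * x ^ (l - j) *
          (Polynomial.bernoulli (0 + j + 1)).eval z / (↑(0:ℕ) + ↑j + 1))
        = ((l + 1).choose (j + 1) : ℚ) * (Polynomial.bernoulli (j + 1)).eval z * x ^ (l - j) := by
    intro j hj
    have hc : (l + 1) * l.choose j = (l + 1).choose (j + 1) * (j + 1) := by
      exact_mod_cast Nat.add_one_mul_choose_eq l j
    have hc' : ((l : ℚ) + 1) * (l.choose j : ℚ) = ((l + 1).choose (j + 1) : ℚ) * ((j : ℚ) + 1) := by
      exact_mod_cast congrArg (Nat.cast (R := ℚ)) hc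
    have hj1 : ((j : ℚ) + 1) ≠ 0 := by positivity
    have e : (0 : ℕ) + j + 1 = j + 1 := by omega
    rw [e]
    push_cast
    field_simp
    linear_combination x ^ (l - j) * (Polynomial.bernoulli (j + 1)).eval z * hc'
  rw [Finset.sum_congr rfl this]
  linarith [hadd]

lemma Rrec (k l : ℕ) (x : ℚ) :
    R (k + 1) l x = -x * R k l x - R k (l + 1) x := by
  have e1 : k + 1 + l = k + l + 1 := by omega
  have e2 : k + (l + 1) = k + l + 1 := by omega
  unfold R
  rw [e1, e2]
  have hs1 : (k + l + 1).choose (l + 1) = (k + l + 1).choose k := by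
    have := Nat.choose_symm (n := k + l + 1) (k := l + 1) (by omega)
    rw [show k + l + 1 - (l + 1) = k by omega] at this
    exact this.symm
  have f1 : ((k + l + 1 : ℕ) : ℚ) * ((k + l).choose k : ℚ)
      = ((k + l + 1).choose (k + 1) : ℚ) * ((k : ℚ) + 1) := by
    exact_mod_cast congrArg (Nat.cast (R := ℚ)) (Nat.add_one_mul_choose_eq (k + l) k)
  have f2 : ((k + l + 1 : ℕ) : ℚ) * ((k + l).choose l : ℚ)
      = ((k + l + 1).choose k : ℚ) * ((l : ℚ) + 1) := by
    rw [← hs1]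
    exact_mod_cast congrArg (Nat.cast (R := ℚ)) (Nat.add_one_mul_choose_eq (k + l) l)
  have hsym : ((k + l).choose l : ℚ) = ((k + l).choose k : ℚ) := by
    have := Nat.choose_symm (n := k + l) (k := k) (by omega)
    rw [show k + l - k = l by omega] at this
    exact_mod_cast this
  rw [hsym] at f2
  have ha : (((k + l).choose k : ℚ)) ≠ 0 :=
    Nat.cast_ne_zero.mpr (Nat.choose_pos (by omega)).ne'
  have hb : (((k + l + 1).choose (k + 1) : ℚ)) ≠ 0 :=
    Nat.cast_ne_zero.mpr (Nat.choose_pos (by omega)).ne'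
  have hc : (((k + l + 1).choose k : ℚ)) ≠ 0 :=
    Nat.cast_ne_zero.mpr (Nat.choose_pos (by omega)).ne'
  have h1 : ((k : ℚ) + 1 + l + 1) ≠ 0 := by positivity
  have h2 : ((k : ℚ) + l + 1) ≠ 0 := by positivity
  have h3 : ((k : ℚ) + (l + 1) + 1) ≠ 0 := by positivity
  have claim : (((k:ℚ) + l + 1) * ((k + l).choose k : ℚ)) *
      (((k + l + 1).choose (k + 1) : ℚ) + ((k + l + 1).choose k : ℚ))
      = (((k:ℚ) + l + 2)) * ((k + l + 1).choose (k + 1) : ℚ) * ((k + l + 1).choose k : ℚ) := by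
    push_cast at f1 f2
    linear_combination ((k + l + 1).choose k : ℚ) * f1 + ((k + l + 1).choose (k + 1) : ℚ) * f2
  push_cast
  field_simp
  linear_combination ((-x) ^ (k + l + 1 + 1) * ((k : ℚ) + l + 2)) * claim

end SunAux

namespace SunAux
open Polynomial

lemma key : ∀ k l : ℕ, ∀ x y z : ℚ, x + y + z = 1 →
    (-1 : ℚ) ^ k * S k l x y + (-1 : ℚ) ^ l * S l k x z = R k l x := by
  intro k
  induction k with
  | zero =>
    intro l x y z h
    have hS0 : S 0 l x y = (Polynomial.bernoulli (l + 1)).eval y / ((l : ℚ) + 1) := by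
      unfold S
      rw [Finset.sum_range_one]
      simp
    have hS := S_base l x z
    have hy : y = 1 - (z + x) := by linarith
    have hrefl : (Polynomial.bernoulli (l + 1)).eval y
        = (-1 : ℚ) ^ (l + 1) * (Polynomial.bernoulli (l + 1)).eval (z + x) := by
      rw [hy]; exact bernoulli_eval_one_sub (l + 1) (z + x)
    have hR0 : R 0 l x = (-x) ^ (l + 1) / ((l : ℚ) + 1) := by
      unfold R
      rw [show (0 : ℕ) + l = l from by omega]
      simp
    rw [hS0, hR0, hrefl]
    have hl1 : ((l : ℚ) + 1) ≠ 0 := by positivity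
    field_simp
    linear_combination (-1 : ℚ) ^ l * hS
  | succ k ih =>
    intro l x y z h
    have h1 := ih l x y z h
    have h2 := ih (l + 1) x y z h
    have e1 := Srec k l x y
    have e2 := Srec l k x z
    have hR := Rrec k l x
    rw [hR, e1, ← h1, ← h2]
    linear_combination (-(-1 : ℚ) ^ l) * e2

end SunAux

theorem sun_bernoulli_poly_div (k l : ℕ) (x y z : ℚ) (h : x + y + z = 1) :
    (-1 : ℚ) ^ k * ∑ j ∈ range (k + 1),
        (k.choose j : ℚ) * x ^ (k - j) * (Polynomial.bernoulli (l + j + 1)).eval y / (l + j + 1)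
      + (-1 : ℚ) ^ l * ∑ j ∈ range (l + 1),
        (l.choose j : ℚ) * x ^ (l - j) * (Polynomial.bernoulli (k + j + 1)).eval z / (k + j + 1)
    = (-x) ^ (k + l + 1) / ((k + l + 1) * ((k + l).choose k : ℚ)) := by
  have hk := SunAux.key k l x y z h
  unfold SunAux.S SunAux.R at hk
  exact hk
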